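/- With the setup of the CRT clause encoding: a 3CNF formula F with m clauses is satisfiable if and only if there exists an integer x with 0 ≤ x < ∏ i, p i such that ∑_{C ∈ F} g_C(x) ≥ m, where the sum is over clause indicator functions g_C defined by congruences modulo the odd primes assigned to the clause's variables. -/

import Mathlib

/-- A 3CNF clause: three (variable index, polarity) pairs. -/
def Clause (n : ℕ) := (Fin n × Bool) × (Fin n × Bool) × (Fin n × Bool)

/-- A clause is satisfied by an assignment `φ` when some literal is satisfied. -/
def ClauseSat {n : ℕ} (φ : Fin n → Bool) (C : Clause n) : Prop :=
  φ C.1.1 = C.1.2 ∨ φ C.2.1.1 = C.2.1.2 ∨ φ C.2.2.1 = C.2.2.2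

open Classical in
/-- The clause indicator function defined via congruences modulo the primes
assigned to the clause's variables. -/
noncomputable def gC {n : ℕ} (p : Fin n → ℕ) (C : Clause n) (x : ℤ) : ℤ :=
  if (x ≡ (if C.1.2 then 1 else 0) [ZMOD (p C.1.1)] ∨
      x ≡ (if C.2.1.2 then 1 else 0) [ZMOD (p C.2.1.1)] ∨
      x ≡ (if C.2.2.2 then 1 else 0) [ZMOD (p C.2.2.1)]) then 1 else 0

private lemma list_sum_le_length (l : List ℤ) (h : ∀ a ∈ l, a ≤ 1) :
    l.sum ≤ (l.length : ℤ) := by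
  induction l with
  | nil => simp
  | cons a l ih =>
    simp only [List.sum_cons, List.length_cons]
    push_cast
    have := ih (fun b hb => h b (List.mem_cons_of_mem a hb))
    have := h a List.mem_cons_self
    omega

private lemma list_all_one (l : List ℤ) (h : ∀ a ∈ l, a ≤ 1)
    (hs : (l.length : ℤ) ≤ l.sum) : ∀ a ∈ l, a = 1 := by
  induction l with
  | nil => simp
  | cons a l ih =>
    have h1 : a ≤ 1 := h a List.mem_cons_self
    have h2 : ∀ b ∈ l, b ≤ 1 := fun b hb => h b (List.mem_cons_of_mem a hb)
    have h3 := list_sum_le_length l h2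
    simp only [List.sum_cons, List.length_cons] at hs
    push_cast at hs
    intro b hb
    rcases List.mem_cons.mp hb with rfl | hb
    · omega
    · exact ih h2 (by omega) b hb

theorem sat_iff_sum_threshold (n : ℕ) (p : Fin n → ℕ)
    (hinj : Function.Injective p)
    (hprime : ∀ i, (p i).Prime) (hodd : ∀ i, 2 < p i)
    (F : List (Clause n))
    (hdistinct : ∀ C ∈ F, C.1.1 ≠ C.2.1.1 ∧ C.1.1 ≠ C.2.2.1 ∧ C.2.1.1 ≠ C.2.2.1) :
    (∃ φ : Fin n → Bool, ∀ C ∈ F, ClauseSat φ C) ↔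
    (∃ x : ℤ, 0 ≤ x ∧ x < ∏ i, (p i : ℤ) ∧
      (F.length : ℤ) ≤ (F.map (fun C => gC p C x)).sum) := by
  classical
  have hfact : ∀ i, Fact (1 < p i) := fun i => ⟨(hprime i).one_lt⟩
  have hNpos : 0 < ∏ i, p i := Finset.prod_pos fun i _ => (hprime i).pos
  have hNZ : NeZero (∏ i, p i) := ⟨hNpos.ne'⟩
  -- congruence in terms of casts
  have hmod : ∀ (x : ℤ) (i : Fin n) (b : Bool),
      (x ≡ (if b then 1 else 0) [ZMOD (p i)]) ↔
      ((x : ZMod (p i)) = if b then 1 else 0) := by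
    intro x i b
    rw [← ZMod.intCast_eq_intCast_iff]
    cases b <;> simp
  constructor
  · rintro ⟨φ, hφ⟩
    have hcop : Pairwise (Function.onFun Nat.Coprime p) := fun i j hij =>
      (Nat.coprime_primes (hprime i) (hprime j)).mpr (fun h => hij (hinj h))
    let e := ZMod.prodEquivPi p hcop
    let z : ZMod (∏ i, p i) := e.symm (fun i => if φ i then 1 else 0)
    refine ⟨(z.val : ℤ), by positivity, ?_, ?_⟩
    · have := ZMod.val_lt z
      have : ((z.val : ℤ)) < ((∏ i, p i : ℕ) : ℤ) := by exact_mod_cast this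
      simpa using this
    · have hx : ∀ i : Fin n, ((z.val : ℤ) : ZMod (p i)) = if φ i then 1 else 0 := by
        intro i
        have h1 : ((z.val : ℕ) : ZMod (∏ i, p i)) = z := ZMod.natCast_rightInverse z
        have h2 : ((Pi.evalRingHom _ i).comp e.toRingHom) ((z.val : ℕ) : ZMod (∏ i, p i))
            = ((z.val : ℕ) : ZMod (p i)) := map_natCast _ _
        rw [h1] at h2
        have h3 : e z = fun i => if φ i then 1 else 0 := e.apply_symm_apply _
        simp only [RingHom.comp_apply, RingEquiv.toRingHom_eq_coe, RingHom.coe_coe,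
          Pi.evalRingHom_apply, h3] at h2
        push_cast
        exact h2.symm
      have hone : ∀ C ∈ F, gC p C (z.val : ℤ) = 1 := by
        intro C hC
        unfold gC
        rw [if_pos]
        rcases hφ C hC with h | h | h
        · exact Or.inl ((hmod _ _ _).mpr (by rw [hx]; rw [h]))
        · exact Or.inr (Or.inl ((hmod _ _ _).mpr (by rw [hx]; rw [h])))
        · exact Or.inr (Or.inr ((hmod _ _ _).mpr (by rw [hx]; rw [h])))
      have : F.map (fun C => gC p C (z.val : ℤ)) = F.map (fun _ => 1) :=
        List.map_congr_left hone
      rw [this]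
      simp [List.map_const']
  · rintro ⟨x, _, _, hsum⟩
    set φ : Fin n → Bool := fun i => decide ((x : ZMod (p i)) = 1) with hφdef
    refine ⟨φ, fun C hC => ?_⟩
    have hle : ∀ a ∈ F.map (fun C => gC p C x), a ≤ 1 := by
      intro a ha
      rcases List.mem_map.mp ha with ⟨C, _, rfl⟩
      unfold gC
      split <;> omega
    have hall := list_all_one _ hle (by simpa using hsum)
    have h1 : gC p C x = 1 :=
      hall _ (List.mem_map.mpr ⟨C, hC, rfl⟩)
    have hcond : (x ≡ (if C.1.2 then 1 else 0) [ZMOD (p C.1.1)] ∨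
        x ≡ (if C.2.1.2 then 1 else 0) [ZMOD (p C.2.1.1)] ∨
        x ≡ (if C.2.2.2 then 1 else 0) [ZMOD (p C.2.2.1)]) := by
      by_contra h
      unfold gC at h1
      rw [if_neg h] at h1
      omega
    have hlit : ∀ (i : Fin n) (b : Bool),
        ((x : ZMod (p i)) = if b then 1 else 0) → φ i = b := by
      intro i b hb
      have := hfact i
      cases b with
      | true => simp [hφdef, hb]
      | false =>
        have : (x : ZMod (p i)) ≠ 1 := by
          rw [hb]; exact zero_ne_one
        simp [hφdef, this]
    rcases hcond with h | h | h
    · exact Or.inl (hlit _ _ ((hmod _ _ _).mp h))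
    · exact Or.inr (Or.inl (hlit _ _ ((hmod _ _ _).mp h)))
    · exact Or.inr (Or.inr (hlit _ _ ((hmod _ _ _).mp h)))
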